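/- Let k be a field, u, v ∈ k with v ≠ 0. Define τ_T(X₀,X₁,X₂,X₃) = (vX₂, −X₁, v⁻¹X₀, X₁ + X₃). If (X₀,X₁,X₂,X₃) ∈ k⁴ satisfies the equations of Q₁ (namely X₃² + X₁X₃ = (X₀ + uX₁ − vX₂)X₁ and X₁² = X₀X₂), then so does τ_T(X₀,X₁,X₂,X₃); moreover τ_T(τ_T(X₀,X₁,X₂,X₃)) = (X₀,X₁,X₂,X₃), so τ_T is a linear involution of Q₁ (translation by the 2-torsion point T = (0:0:1:0)). -/
import Mathlib

/-- Translation by the 2-torsion point `T = (0:0:1:0)` on `Q₁`,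
`τ_T(X₀,X₁,X₂,X₃) = (vX₂, −X₁, v⁻¹X₀, X₁+X₃)`, preserves the equations
of `Q₁` and is an involution. -/
theorem translation_by_T_linear_involution {k : Type*} [Field k]
    (u v : k) (hv : v ≠ 0) (X₀ X₁ X₂ X₃ : k)
    (h1 : X₃ ^ 2 + X₁ * X₃ = (X₀ + u * X₁ - v * X₂) * X₁)
    (h2 : X₁ ^ 2 = X₀ * X₂) :
    (let τ : k × k × k × k → k × k × k × k := fun P =>
      (v * P.2.2.1, -P.2.1, v⁻¹ * P.1, P.2.1 + P.2.2.2)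
     let Y := τ (X₀, X₁, X₂, X₃)
     (Y.2.2.2 ^ 2 + Y.2.1 * Y.2.2.2 =
        (Y.1 + u * Y.2.1 - v * Y.2.2.1) * Y.2.1 ∧
      Y.2.1 ^ 2 = Y.1 * Y.2.2.1) ∧
     τ (τ (X₀, X₁, X₂, X₃)) = (X₀, X₁, X₂, X₃)) := by
  have hv' : v * v⁻¹ = 1 := mul_inv_cancel₀ hv
  refine ⟨⟨?_, ?_⟩, ?_⟩
  · linear_combination h1 - X₀ * X₁ * hv'
  · linear_combination h2 - X₀ * X₂ * hv'
  · simp only [Prod.mk.injEq]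
    refine ⟨?_, by ring, ?_, by ring⟩
    · linear_combination X₀ * hv'
    · linear_combination X₂ * hv'
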